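/- In the FPA-EQ mechanism, every feasible allocation that maximizes the sum of the included bids yields the same multiset of positive bids among included transactions as the recommended allocation B*; i.e., all bid-sum-maximizing feasible allocations are equivalent. -/

import Mathlib

open Finset

namespace FpaeqAux

open scoped Classical

set_option linter.unusedSectionVars false

variable {ι : Type*} [DecidableEq ι] [Fintype ι] {m k : ℕ}

/-- The set of blocks hit by `X`. -/
noncomputable def Jset (S : Fin m → Finset ι) (X : Finset ι) : Finset (Fin m) :=
  Finset.univ.filter (fun j => ∃ i ∈ X, i ∈ S j)

/-- Hall-type independence condition. -/
def Hall (S : Fin m → Finset ι) (k : ℕ) (A : Finset ι) : Prop :=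
  ∀ X ⊆ A, X.card ≤ k * (Jset S X).card

/-- Feasibility: `A` is the union of blocks `B j ⊆ S j` of size at most `k`. -/
def Feas (S : Fin m → Finset ι) (k : ℕ) (A : Finset ι) : Prop :=
  ∃ B : Fin m → Finset ι, (∀ j, B j ⊆ S j ∧ (B j).card ≤ k) ∧ Finset.univ.biUnion B = A

lemma Jset_mono {S : Fin m → Finset ι} {X Y : Finset ι} (h : X ⊆ Y) :
    Jset S X ⊆ Jset S Y := by
  intro j hj
  simp only [Jset, mem_filter, mem_univ, true_and] at hj ⊢
  obtain ⟨i, hiX, hiS⟩ := hj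
  exact ⟨i, h hiX, hiS⟩

lemma Jset_empty {S : Fin m → Finset ι} : Jset S (∅ : Finset ι) = ∅ := by
  simp [Jset]

lemma Jset_union {S : Fin m → Finset ι} (X Y : Finset ι) :
    Jset S (X ∪ Y) = Jset S X ∪ Jset S Y := by
  ext j
  simp only [Jset, mem_filter, mem_univ, true_and, mem_union]
  constructor
  · rintro ⟨i, hi | hi, hiS⟩
    · exact Or.inl ⟨i, hi, hiS⟩
    · exact Or.inr ⟨i, hi, hiS⟩
  · rintro (⟨i, hi, hiS⟩ | ⟨i, hi, hiS⟩)
    · exact ⟨i, Or.inl hi, hiS⟩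
    · exact ⟨i, Or.inr hi, hiS⟩

/-- Submodularity of `X ↦ k * |Jset S X|`. -/
lemma submod {S : Fin m → Finset ι} (X Y : Finset ι) :
    k * (Jset S (X ∪ Y)).card + k * (Jset S (X ∩ Y)).card ≤
      k * (Jset S X).card + k * (Jset S Y).card := by
  have h1 : (Jset S (X ∪ Y)).card + (Jset S (X ∩ Y)).card ≤
      (Jset S X).card + (Jset S Y).card := by
    have h2 : Jset S (X ∩ Y) ⊆ Jset S X ∩ Jset S Y :=
      subset_inter (Jset_mono inter_subset_left) (Jset_mono inter_subset_right)
    calc (Jset S (X ∪ Y)).card + (Jset S (X ∩ Y)).card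
        ≤ (Jset S X ∪ Jset S Y).card + (Jset S X ∩ Jset S Y).card := by
          refine Nat.add_le_add ?_ (card_le_card h2)
          rw [Jset_union]
      _ = (Jset S X).card + (Jset S Y).card := card_union_add_card_inter _ _
  calc k * (Jset S (X ∪ Y)).card + k * (Jset S (X ∩ Y)).card
      = k * ((Jset S (X ∪ Y)).card + (Jset S (X ∩ Y)).card) := (Nat.mul_add _ _ _).symm
    _ ≤ k * ((Jset S X).card + (Jset S Y).card) := Nat.mul_le_mul_left _ h1
    _ = _ := Nat.mul_add _ _ _

lemma hall_mono {S : Fin m → Finset ι} {A A' : Finset ι} (h : Hall S k A) (hsub : A' ⊆ A) :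
    Hall S k A' := fun X hX => h X (hX.trans hsub)

lemma feas_hall {S : Fin m → Finset ι} {A : Finset ι} (h : Feas S k A) : Hall S k A := by
  obtain ⟨B, hB, hU⟩ := h
  intro X hX
  have hcover : X ⊆ (Jset S X).biUnion (fun j => B j ∩ X) := by
    intro i hi
    have hiA : i ∈ Finset.univ.biUnion B := by rw [hU]; exact hX hi
    obtain ⟨j, _, hij⟩ := mem_biUnion.1 hiA
    refine mem_biUnion.2 ⟨j, ?_, mem_inter.2 ⟨hij, hi⟩⟩
    simp only [Jset, mem_filter, mem_univ, true_and]
    exact ⟨i, hi, (hB j).1 hij⟩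
  calc X.card ≤ ((Jset S X).biUnion (fun j => B j ∩ X)).card := card_le_card hcover
    _ ≤ ∑ j ∈ Jset S X, (B j ∩ X).card := card_biUnion_le
    _ ≤ ∑ _j ∈ Jset S X, k := by
        refine sum_le_sum fun j _ => ?_
        exact (card_le_card inter_subset_left).trans (hB j).2
    _ = (Jset S X).card * k := sum_const_nat fun _ _ => rfl
    _ = k * (Jset S X).card := Nat.mul_comm _ _

lemma hall_feas {S : Fin m → Finset ι} {A : Finset ι} (h : Hall S k A) : Feas S k A := by
  set t : ↥A → Finset (Fin m × Fin k) :=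
    fun i => (Finset.univ.filter (fun j => (i : ι) ∈ S j)) ×ˢ Finset.univ with ht
  have hall : ∀ s : Finset ↥A, s.card ≤ (s.biUnion t).card := by
    intro s
    have himg : (s.image (Subtype.val : ↥A → ι)).card = s.card :=
      card_image_of_injective _ Subtype.coe_injective
    have hsub : s.biUnion t =
        (Jset S (s.image (Subtype.val : ↥A → ι))) ×ˢ (Finset.univ : Finset (Fin k)) := by
      ext ⟨j, l⟩
      simp only [ht, mem_biUnion, mem_product, mem_filter, mem_univ, true_and, and_true,
        Jset, mem_image]
      constructor
      · rintro ⟨i, his, hiS⟩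
        exact ⟨i, ⟨i, his, rfl⟩, hiS⟩
      · rintro ⟨x, ⟨i, his, rfl⟩, hiS⟩
        exact ⟨i, his, hiS⟩
    rw [hsub, card_product, card_univ, Fintype.card_fin]
    have := h (s.image (Subtype.val : ↥A → ι)) (by
      intro x hx
      obtain ⟨i, _, rfl⟩ := mem_image.1 hx
      exact i.2)
    rw [himg] at this
    calc s.card ≤ k * (Jset S (s.image (Subtype.val : ↥A → ι))).card := this
      _ = (Jset S (s.image (Subtype.val : ↥A → ι))).card * k := Nat.mul_comm _ _
  obtain ⟨f, hfinj, hft⟩ := (Finset.all_card_le_biUnion_card_iff_exists_injective t).1 hall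
  refine ⟨fun j => (Finset.univ.filter (fun i : ↥A => (f i).1 = j)).image (Subtype.val : ↥A → ι),
    fun j => ⟨?_, ?_⟩, ?_⟩
  · intro x hx
    obtain ⟨i, hi, rfl⟩ := mem_image.1 hx
    have := hft i
    simp only [ht, mem_product, mem_filter, mem_univ, true_and] at this
    have hj : (f i).1 = j := (mem_filter.1 hi).2
    rw [← hj]; exact this.1
  · calc ((Finset.univ.filter (fun i : ↥A => (f i).1 = j)).image (Subtype.val : ↥A → ι)).card
        ≤ (Finset.univ.filter (fun i : ↥A => (f i).1 = j)).card := card_image_le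
      _ ≤ (Finset.univ : Finset (Fin k)).card := by
          refine card_le_card_of_injOn (fun i => (f i).2) (fun _ _ => mem_univ _) ?_
          intro i₁ h₁ i₂ h₂ heq
          simp only [coe_filter, Set.mem_setOf_eq] at h₁ h₂
          apply hfinj
          exact Prod.ext (h₁.2.trans h₂.2.symm) heq
      _ = k := by rw [card_univ, Fintype.card_fin]
  · ext x
    constructor
    · intro hx
      obtain ⟨j, _, hx⟩ := mem_biUnion.1 hx
      obtain ⟨i, _, rfl⟩ := mem_image.1 hx
      exact i.2
    · intro hx
      refine mem_biUnion.2 ⟨(f ⟨x, hx⟩).1, mem_univ _, mem_image.2 ⟨⟨x, hx⟩, ?_, rfl⟩⟩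
      simp

set_option maxHeartbeats 1000000 in
/-- Exchange property. -/
lemma exchange {S : Fin m → Finset ι} {A C : Finset ι}
    (hA : Hall S k A) (hC : Hall S k C) (hlt : A.card < C.card) :
    ∃ x ∈ C, x ∉ A ∧ Hall S k (insert x A) := by
  by_contra hcon
  push_neg at hcon
  set f : Finset ι → ℕ := fun X => k * (Jset S X).card with hf
  have fmono : ∀ {X Y : Finset ι}, X ⊆ Y → f X ≤ f Y :=
    fun h => Nat.mul_le_mul_left _ (card_le_card (Jset_mono h))
  have fsub : ∀ X Y : Finset ι, f (X ∪ Y) + f (X ∩ Y) ≤ f X + f Y := submod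
  -- for each x ∈ C \ A, pick a violating set
  have hviol : ∀ x ∈ C \ A, ∃ X, X ⊆ insert x A ∧ f X < X.card := by
    intro x hx
    rw [mem_sdiff] at hx
    have := hcon x hx.1 hx.2
    rw [Hall] at this
    push_neg at this
    obtain ⟨X, hX1, hX2⟩ := this
    exact ⟨X, hX1, hX2⟩
  have hviol2 : ∀ x : ι, ∃ X : Finset ι, x ∈ C \ A → (X ⊆ insert x A ∧ f X < X.card) := by
    intro x
    by_cases hx : x ∈ C \ A
    · obtain ⟨X, h1, h2⟩ := hviol x hx
      exact ⟨X, fun _ => ⟨h1, h2⟩⟩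
    · exact ⟨∅, fun h => absurd h hx⟩
  choose Xv hXvspec' using hviol2
  have hXvspec : ∀ x ∈ C \ A, Xv x ⊆ insert x A ∧ f (Xv x) < (Xv x).card :=
    fun x hx => hXvspec' x hx
  set Tx : ι → Finset ι := fun x => Xv x \ {x} with hTx
  have hTxA : ∀ x ∈ C \ A, Tx x ⊆ A := by
    intro x hx i hi
    rw [hTx] at hi
    simp only [mem_sdiff, mem_singleton] at hi
    rcases mem_insert.1 ((hXvspec x hx).1 hi.1) with h | h
    · exact absurd h hi.2
    · exact h
  have hxXv : ∀ x ∈ C \ A, x ∈ Xv x := by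
    intro x hx
    by_contra hxx
    have hsubA : Xv x ⊆ A := by
      intro i hi
      rcases mem_insert.1 ((hXvspec x hx).1 hi) with h | h
      · exact absurd (h ▸ hi) hxx
      · exact h
    exact absurd (hA _ hsubA) (Nat.not_le.2 (hXvspec x hx).2)
  -- tightness facts
  have htight : ∀ x ∈ C \ A, f (Tx x) = (Tx x).card ∧ f (Xv x) = f (Tx x) := by
    intro x hx
    have hxv := hxXv x hx
    have hcards : (Tx x).card + 1 = (Xv x).card := by
      rw [hTx]
      simp only
      rw [sdiff_singleton_eq_erase, card_erase_of_mem hxv]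
      have : 1 ≤ (Xv x).card := card_pos.2 ⟨x, hxv⟩
      omega
    have h1 : (Tx x).card ≤ f (Tx x) := hA _ (hTxA x hx)
    have h2 : f (Tx x) ≤ f (Xv x) := fmono (sdiff_subset)
    have h3 : f (Xv x) < (Xv x).card := (hXvspec x hx).2
    omega
  -- key: inserting x into any superset of Tx x does not increase f
  have hkey : ∀ x ∈ C \ A, ∀ Y : Finset ι, Tx x ⊆ Y → f (insert x Y) ≤ f Y := by
    intro x hx Y hTY
    have hunion : insert x Y = Xv x ∪ Y := by
      ext i
      simp only [mem_insert, mem_union]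
      constructor
      · rintro (h1 | h)
        · rw [h1]
          exact Or.inl (hxXv x hx)
        · exact Or.inr h
      · rintro (h | h)
        · rcases eq_or_ne i x with rfl | hne
          · exact Or.inl rfl
          · exact Or.inr (hTY (by rw [hTx]; simp [mem_sdiff, h, hne]))
        · exact Or.inr h
    have hsub := fsub (Xv x) Y
    have hmon : f (Tx x) ≤ f (Xv x ∩ Y) := by
      refine fmono (subset_inter ?_ hTY)
      rw [hTx]; exact sdiff_subset
    have ht := htight x hx
    rw [hunion]
    omega
  -- the union of the tight sets
  set T : Finset ι := (C \ A).biUnion Tx with hT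
  have hTA : T ⊆ A := by
    intro i hi
    obtain ⟨x, hx, hix⟩ := mem_biUnion.1 hi
    exact hTxA x hx hix
  have hTtight : f T ≤ T.card := by
    have : ∀ s : Finset ι, s ⊆ C \ A → f (s.biUnion Tx) ≤ (s.biUnion Tx).card := by
      intro s
      induction s using Finset.induction_on with
      | empty => intro _; simp [hf, Jset_empty]
      | insert a s hnotmem ih =>
        intro hs
        have haD : a ∈ C \ A := hs (mem_insert_self a s)
        have hsD : s ⊆ C \ A := fun y hy => hs (mem_insert_of_mem hy)
        rw [biUnion_insert]
        have hsubm := fsub (Tx a) (s.biUnion Tx)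
        have hint : (Tx a ∩ s.biUnion Tx).card ≤ f (Tx a ∩ s.biUnion Tx) := by
          refine hA _ ?_
          exact inter_subset_left.trans (hTxA a haD)
        have hta : f (Tx a) = (Tx a).card := (htight a haD).1
        have hih := ih hsD
        have hcu : (Tx a ∪ s.biUnion Tx).card + (Tx a ∩ s.biUnion Tx).card
            = (Tx a).card + (s.biUnion Tx).card := card_union_add_card_inter _ _
        omega
    exact this _ Subset.rfl
  have hTD : f (T ∪ (C \ A)) ≤ f T := by
    have : ∀ s : Finset ι, s ⊆ C \ A → f (T ∪ s) ≤ f T := by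
      intro s
      induction s using Finset.induction_on with
      | empty => intro _; simp
      | insert a s hnotmem ih =>
        intro hs
        have haD : a ∈ C \ A := hs (mem_insert_self a s)
        have hsD : s ⊆ C \ A := fun y hy => hs (mem_insert_of_mem hy)
        have h1 : T ∪ insert a s = insert a (T ∪ s) := by
          ext i; simp only [mem_union, mem_insert]; tauto
        rw [h1]
        have h2 : Tx a ⊆ T ∪ s :=
          (subset_biUnion_of_mem Tx haD).trans subset_union_left
        exact (hkey a haD _ h2).trans (ih hsD)
    exact this _ Subset.rfl
  -- final counting contradiction
  have hbad : (C ∩ (T ∪ (C \ A))).card ≤ f (C ∩ (T ∪ (C \ A))) :=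
    hC _ inter_subset_left
  have h1 : f (C ∩ (T ∪ (C \ A))) ≤ f T :=
    (fmono inter_subset_right).trans hTD
  have h2 : C ∩ (T ∪ (C \ A)) = (C ∩ T) ∪ (C \ A) := by
    ext i
    simp only [mem_inter, mem_union, mem_sdiff]
    tauto
  have h3 : ((C ∩ T) ∪ (C \ A)).card = (C ∩ T).card + (C \ A).card := by
    refine card_union_of_disjoint ?_
    rw [disjoint_left]
    intro i hi hi2
    exact (mem_sdiff.1 hi2).2 (hTA (mem_inter.1 hi).2)
  have h4 : T.card ≤ (C ∩ T).card + (A \ C).card := by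
    have : T ⊆ (C ∩ T) ∪ (A \ C) := by
      intro i hi
      simp only [mem_union, mem_inter, mem_sdiff]
      rcases Classical.em (i ∈ C) with h | h
      · exact Or.inl ⟨h, hi⟩
      · exact Or.inr ⟨hTA hi, h⟩
    exact (card_le_card this).trans (card_union_le _ _)
  have h5 : (A \ C).card < (C \ A).card := by
    have hA' : (A ∩ C).card + (A \ C).card = A.card := card_inter_add_card_sdiff A C
    have hC' : (C ∩ A).card + (C \ A).card = C.card := card_inter_add_card_sdiff C A
    have hic : (A ∩ C).card = (C ∩ A).card := by rw [inter_comm]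
    omega
  rw [h2, h3] at hbad
  rw [h2] at h1
  omega
/-- Grow a feasible set inside `insert x A` until it has at least `A.card` elements. -/
lemma grow {S : Fin m → Finset ι} {A : Finset ι} {x : ι} (hA : Hall S k A) :
    ∀ (n : ℕ) (C : Finset ι), Hall S k C → C ⊆ insert x A → A.card ≤ C.card + n →
      ∃ C', Hall S k C' ∧ C ⊆ C' ∧ C' ⊆ insert x A ∧ A.card ≤ C'.card := by
  intro n
  induction n with
  | zero => exact fun C hC hsub hcard => ⟨C, hC, Subset.rfl, hsub, by omega⟩
  | succ n ih =>
    intro C hC hsub hcard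
    by_cases h : A.card ≤ C.card
    · exact ⟨C, hC, Subset.rfl, hsub, h⟩
    · push_neg at h
      obtain ⟨y, hyA, hyC, hy⟩ := exchange hC hA h
      obtain ⟨C', hC', hs1, hs2, hc⟩ := ih (insert y C) hy
        (insert_subset (mem_insert_of_mem hyA) hsub)
        (by rw [card_insert_of_notMem hyC]; omega)
      exact ⟨C', hC', (subset_insert _ _).trans hs1, hs2, hc⟩

/-- Key lemma: a sum-maximizing feasible set has at least as many elements above
any positive threshold as any other feasible set. -/
lemma key {S : Fin m → Finset ι} (b : ι → ℝ) {A₁ A₂ : Finset ι}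
    (h1 : Feas S k A₁) (h2 : Feas S k A₂)
    (hmax : ∀ C : Finset ι, Feas S k C → ∑ i ∈ C, b i ≤ ∑ i ∈ A₁, b i)
    {t : ℝ} (ht : 0 < t) :
    (A₂.filter (fun i => t ≤ b i)).card ≤ (A₁.filter (fun i => t ≤ b i)).card := by
  by_contra h
  push_neg at h
  set F₁ := A₁.filter (fun i => t ≤ b i) with hF₁
  set F₂ := A₂.filter (fun i => t ≤ b i) with hF₂
  have hH1 : Hall S k F₁ := hall_mono (feas_hall h1) (filter_subset _ _)
  have hH2 : Hall S k F₂ := hall_mono (feas_hall h2) (filter_subset _ _)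
  obtain ⟨x, hxF2, hxF1, hHx⟩ := exchange hH1 hH2 h
  have hxb : t ≤ b x := (mem_filter.1 hxF2).2
  have hxA1 : x ∉ A₁ := fun hx => hxF1 (mem_filter.2 ⟨hx, hxb⟩)
  have hsub : insert x F₁ ⊆ insert x A₁ := insert_subset_insert _ (filter_subset _ _)
  have hA1Hall : Hall S k A₁ := feas_hall h1
  obtain ⟨C', hC', hsub1, hsub2, hcard⟩ :=
    grow hA1Hall A₁.card (insert x F₁) hHx hsub (by omega)
  have hxC' : x ∈ C' := hsub1 (mem_insert_self _ _)
  set E := C'.erase x with hE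
  have hEA : E ⊆ A₁ := by
    intro i hi
    have hiC : i ∈ insert x A₁ := hsub2 (erase_subset _ _ hi)
    rcases mem_insert.1 hiC with h' | h'
    · exact absurd (h' ▸ hi) (notMem_erase _ _)
    · exact h'
  have hsumC' : ∑ i ∈ C', b i = b x + ∑ i ∈ E, b i := by
    rw [← sum_insert (notMem_erase x C'), insert_erase hxC']
  have hsumA : ∑ i ∈ A₁ \ E, b i + ∑ i ∈ E, b i = ∑ i ∈ A₁, b i := sum_sdiff hEA
  have hcardE : A₁.card ≤ E.card + 1 := by
    have h1' : 1 ≤ C'.card := card_pos.2 ⟨x, hxC'⟩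
    rw [hE, card_erase_of_mem hxC']
    omega
  have hcardAE : (A₁ \ E).card ≤ 1 := by
    have hds := card_sdiff_of_subset hEA
    have hE1 : E.card ≤ A₁.card := card_le_card hEA
    omega
  have hsmall : ∑ i ∈ A₁ \ E, b i < t := by
    have hbound : ∀ i ∈ A₁ \ E, b i < t := by
      intro i hi
      rw [mem_sdiff] at hi
      by_contra hge
      push_neg at hge
      have hiF : i ∈ F₁ := mem_filter.2 ⟨hi.1, hge⟩
      have hiC : i ∈ C' := hsub1 (mem_insert_of_mem hiF)
      have hne : i ≠ x := fun he => hxA1 (he ▸ hi.1)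
      exact hi.2 (mem_erase.2 ⟨hne, hiC⟩)
    rcases (A₁ \ E).eq_empty_or_nonempty with he | ⟨y, hy⟩
    · rw [he]; simpa using ht
    · have hsing : A₁ \ E = {y} := by
        refine eq_singleton_iff_unique_mem.2 ⟨hy, fun z hz => ?_⟩
        exact card_le_one.1 hcardAE z hz y hy
      rw [hsing, sum_singleton]
      exact hbound y hy
  have hlt : ∑ i ∈ A₁, b i < ∑ i ∈ C', b i := by
    rw [hsumC', ← hsumA]
    linarith
  exact absurd (hmax C' (hall_feas hC')) (not_le.2 hlt)

lemma split_card (b : ι → ℝ) (A : Finset ι) {v t' : ℝ} (hv : v < t')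
    (hiff : ∀ i : ι, v < b i ↔ t' ≤ b i) :
    (A.filter (fun i => v ≤ b i)).card
      = (A.filter (fun i => v = b i)).card + (A.filter (fun i => t' ≤ b i)).card := by
  have hdisj : Disjoint (A.filter (fun i => v = b i)) (A.filter (fun i => t' ≤ b i)) := by
    rw [disjoint_left]
    intro i hi1 hi2
    have h1 : v = b i := (mem_filter.1 hi1).2
    have h2 : t' ≤ b i := (mem_filter.1 hi2).2
    exact absurd ((hiff i).2 h2) (by rw [← h1]; exact lt_irrefl v)
  rw [← card_union_of_disjoint hdisj, ← filter_or]
  apply congrArg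
  apply filter_congr
  intro i _
  constructor
  · intro hle
    rcases eq_or_lt_of_le hle with h' | h'
    · exact Or.inl h'
    · exact Or.inr ((hiff i).1 h')
  · rintro (h' | h')
    · exact le_of_eq h'
    · exact le_of_lt ((hiff i).2 h')

lemma count_aux (b : ι → ℝ) (A : Finset ι) (v : ℝ) :
    Multiset.count v ((A.filter fun i => 0 < b i).val.map b)
      = (A.filter (fun i => 0 < b i ∧ v = b i)).card := by
  rw [Multiset.count_map]
  rw [← Finset.filter_val, Finset.filter_filter]
  rfl
end FpaeqAux

open FpaeqAux in
open scoped Classical in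
/-- In FPA-EQ, any two feasible allocations that maximize the sum of the included
bids are equivalent: the multisets of positive bids of their included transactions
coincide.  Here an allocation is a tuple of blocks `B_j ⊆ S_j` with `|B_j| ≤ k`. -/
theorem fpaeq_maximizers_equivalent {ι : Type*} [DecidableEq ι] [Fintype ι]
    {m : ℕ} (b : ι → ℝ) (hb : ∀ i, 0 ≤ b i) (S : Fin m → Finset ι) (k : ℕ)
    (B₁ B₂ : Fin m → Finset ι)
    (hfeas₁ : ∀ j, B₁ j ⊆ S j ∧ (B₁ j).card ≤ k)
    (hfeas₂ : ∀ j, B₂ j ⊆ S j ∧ (B₂ j).card ≤ k)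
    (hmax₁ : ∀ B : Fin m → Finset ι, (∀ j, B j ⊆ S j ∧ (B j).card ≤ k) →
      ∑ i ∈ Finset.univ.biUnion B, b i ≤ ∑ i ∈ Finset.univ.biUnion B₁, b i)
    (hmax₂ : ∀ B : Fin m → Finset ι, (∀ j, B j ⊆ S j ∧ (B j).card ≤ k) →
      ∑ i ∈ Finset.univ.biUnion B, b i ≤ ∑ i ∈ Finset.univ.biUnion B₂, b i) :
    (((Finset.univ.biUnion B₁).filter fun i => 0 < b i).val.map b) =
      (((Finset.univ.biUnion B₂).filter fun i => 0 < b i).val.map b) := by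
  set A₁ := Finset.univ.biUnion B₁ with hA₁
  set A₂ := Finset.univ.biUnion B₂ with hA₂
  have hf1 : Feas S k A₁ := ⟨B₁, hfeas₁, rfl⟩
  have hf2 : Feas S k A₂ := ⟨B₂, hfeas₂, rfl⟩
  have hmax1' : ∀ C : Finset ι, Feas S k C → ∑ i ∈ C, b i ≤ ∑ i ∈ A₁, b i := by
    rintro C ⟨B, hB, hU⟩
    rw [← hU]
    exact hmax₁ B hB
  have hmax2' : ∀ C : Finset ι, Feas S k C → ∑ i ∈ C, b i ≤ ∑ i ∈ A₂, b i := by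
    rintro C ⟨B, hB, hU⟩
    rw [← hU]
    exact hmax₂ B hB
  have hEq : ∀ t : ℝ, 0 < t →
      (A₁.filter (fun i => t ≤ b i)).card = (A₂.filter (fun i => t ≤ b i)).card :=
    fun t ht => le_antisymm (key b hf2 hf1 hmax2' ht) (key b hf1 hf2 hmax1' ht)
  refine Multiset.ext.2 fun v => ?_
  rw [count_aux, count_aux]
  by_cases hv : 0 < v
  · have hcongr : ∀ A : Finset ι, A.filter (fun i => 0 < b i ∧ v = b i)
        = A.filter (fun i => v = b i) := by
      intro A
      apply filter_congr
      intro i _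
      constructor
      · exact fun h => h.2
      · exact fun h => ⟨h ▸ hv, h⟩
    rw [hcongr, hcongr]
    -- find t' with v < b i ↔ t' ≤ b i
    obtain ⟨t', hvt', hiff⟩ : ∃ t' : ℝ, v < t' ∧ ∀ i : ι, v < b i ↔ t' ≤ b i := by
      set G := (Finset.univ.filter (fun i : ι => v < b i)).image b with hG
      have hGlt : ∀ y ∈ G, v < y := by
        intro y hy
        rw [hG] at hy
        obtain ⟨i, hi, hbi⟩ := Finset.mem_image.1 hy
        have hvi : v < b i := (Finset.mem_filter.1 hi).2
        rw [hbi] at hvi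
        exact hvi
      have hGmem : ∀ i : ι, v < b i → b i ∈ G := by
        intro i h
        rw [hG]
        exact Finset.mem_image.2 ⟨i, Finset.mem_filter.2 ⟨Finset.mem_univ _, h⟩, rfl⟩
      by_cases hGne : G.Nonempty
      · refine ⟨G.min' hGne, hGlt _ (G.min'_mem hGne), fun i => ?_⟩
        constructor
        · intro h
          exact G.min'_le _ (hGmem i h)
        · intro h
          exact lt_of_lt_of_le (hGlt _ (G.min'_mem hGne)) h
      · refine ⟨v + 1, by linarith, fun i => ?_⟩
        constructor
        · intro h
          exact absurd ⟨b i, hGmem i h⟩ hGne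
        · intro h
          have : v < b i := by linarith
          exact absurd ⟨b i, hGmem i this⟩ hGne
    have hs1 := split_card b A₁ hvt' hiff
    have hs2 := split_card b A₂ hvt' hiff
    have he1 := hEq v hv
    have he2 := hEq t' (lt_trans hv hvt')
    omega
  · have hempty : ∀ A : Finset ι, A.filter (fun i => 0 < b i ∧ v = b i) = ∅ := by
      intro A
      refine Finset.filter_false_of_mem ?_
      rintro i _ ⟨h1, rfl⟩
      exact hv h1
    rw [hempty, hempty]
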